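/- Let G = (V,E) be a finite connected simple graph whose girth is at least g, and let δ = 2|E|/|V| be its average degree. Let s be an integer with 1 < s < g/2. Then for every map f : V → ℓ₂, every real α ≥ 1 and every scaling factor r > 0 such that r·d_G(u,v) ≤ ‖f(u) − f(v)‖ ≤ α·r·d_G(u,v) for all u,v ∈ V with d_G(u,v) ≤ s, one has α ≥ ((δ−2)/δ)·√s. In particular, every α-embedding of (V, d_G) into ℓ₂ satisfies α ≥ ((δ−2)/δ)·√(⌊g/2⌋ − 1). -/

import Mathlib

open Finset SimpleGraph Matrix

set_option linter.unusedSectionVars false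
set_option linter.unusedVariables false
set_option maxHeartbeats 1000000

namespace GD

variable {V : Type} [Fintype V] [DecidableEq V]

noncomputable def sd (G : SimpleGraph V) [DecidableRel G.Adj] (v : V) : ℝ :=
  Real.sqrt (G.degree v)

lemma sd_nonneg (G : SimpleGraph V) [DecidableRel G.Adj] (v : V) : 0 ≤ sd G v :=
  Real.sqrt_nonneg _

noncomputable def Smat (G : SimpleGraph V) [DecidableRel G.Adj] : Matrix V V ℝ :=
  Matrix.of fun x v => if G.Adj x v then (sd G x * sd G v)⁻¹ else 0

variable (G : SimpleGraph V) [DecidableRel G.Adj]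

noncomputable def Wt (k : ℕ) (x v : V) : ℝ := sd G x * sd G v * (Smat G ^ k) x v

lemma smat_symm : (Smat G).IsHermitian := by
  unfold Matrix.IsHermitian
  ext x v
  simp only [Smat, Matrix.conjTranspose_apply, Matrix.of_apply, star_trivial]
  rw [mul_comm (sd G x)]
  exact if_congr (G.adj_comm v x) rfl rfl

lemma smat_nonneg (x v : V) : 0 ≤ Smat G x v := by
  simp only [Smat, Matrix.of_apply]
  split
  · exact inv_nonneg.mpr (mul_nonneg (sd_nonneg G _) (sd_nonneg G _))
  · exact le_refl _

lemma smat_pow_nonneg (k : ℕ) (x v : V) : 0 ≤ (Smat G ^ k) x v := by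
  induction k generalizing x v with
  | zero =>
    simp only [pow_zero, Matrix.one_apply]
    split <;> norm_num
  | succ k ih =>
    rw [pow_succ, Matrix.mul_apply]
    exact Finset.sum_nonneg fun u _ => mul_nonneg (ih x u) (smat_nonneg G u v)

lemma smat_pow_dist (hconn : G.Connected) (k : ℕ) (x v : V)
    (h : (Smat G ^ k) x v ≠ 0) : G.dist x v ≤ k := by
  induction k generalizing v with
  | zero =>
    rw [pow_zero, Matrix.one_apply] at h
    have : x = v := by by_contra hn; simp [hn] at h
    subst this
    simp
  | succ k ih =>
    rw [pow_succ, Matrix.mul_apply] at h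
    obtain ⟨u, -, hu⟩ := Finset.exists_ne_zero_of_sum_ne_zero h
    have h1 : (Smat G ^ k) x u ≠ 0 := left_ne_zero_of_mul hu
    have h2 : Smat G u v ≠ 0 := right_ne_zero_of_mul hu
    have hadj : G.Adj u v := by
      by_contra hn
      simp [Smat, hn] at h2
    calc G.dist x v ≤ G.dist x u + G.dist u v := hconn.dist_triangle
      _ ≤ k + 1 := by
          have hxu := ih u h1
          have huv : G.dist u v = 1 := dist_eq_one_iff_adj.mpr hadj
          omega

lemma sd_pos (hdeg : ∀ v, 0 < G.degree v) (v : V) : 0 < sd G v := by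
  have : (0:ℝ) < G.degree v := by exact_mod_cast hdeg v
  exact Real.sqrt_pos.mpr this

lemma sd_sq (v : V) : sd G v * sd G v = G.degree v :=
  Real.mul_self_sqrt (Nat.cast_nonneg _)

lemma smat_rowsum (hdeg : ∀ v, 0 < G.degree v) (k : ℕ) (x : V) :
    ∑ v, (Smat G ^ k) x v * sd G v = sd G x := by
  induction k generalizing x with
  | zero => simp [Matrix.one_apply]
  | succ k ih =>
    have hbase : ∀ u, ∑ v, Smat G u v * sd G v = sd G u := by
      intro u
      have : ∑ v, Smat G u v * sd G v
          = ∑ v ∈ G.neighborFinset u, (sd G u)⁻¹ := by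
        rw [SimpleGraph.neighborFinset_eq_filter, Finset.sum_filter]
        apply Finset.sum_congr rfl
        intro v _
        simp only [Smat, Matrix.of_apply, ite_mul, zero_mul]
        by_cases h : G.Adj u v
        · rw [if_pos h, if_pos h, mul_inv, mul_assoc,
            inv_mul_cancel₀ (sd_pos G hdeg v).ne', mul_one]
        · rw [if_neg h, if_neg h]
      rw [this, Finset.sum_const, SimpleGraph.card_neighborFinset_eq_degree,
        nsmul_eq_mul]
      rw [← sd_sq G u, mul_assoc, mul_inv_cancel₀ (sd_pos G hdeg u).ne', mul_one]
    rw [pow_succ]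
    calc ∑ v, (Smat G ^ k * Smat G) x v * sd G v
        = ∑ v, ∑ u, (Smat G ^ k) x u * (Smat G u v * sd G v) := by
          apply Finset.sum_congr rfl; intro v _
          rw [Matrix.mul_apply, Finset.sum_mul]
          exact Finset.sum_congr rfl fun u _ => mul_assoc _ _ _
      _ = ∑ u, (Smat G ^ k) x u * ∑ v, Smat G u v * sd G v := by
          rw [Finset.sum_comm]
          exact Finset.sum_congr rfl fun u _ => (Finset.mul_sum _ _ _).symm
      _ = sd G x := by
          rw [Finset.sum_congr rfl fun u _ => by rw [hbase u]]
          exact ih x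

lemma wt_nonneg (k : ℕ) (x v : V) : 0 ≤ Wt G k x v :=
  mul_nonneg (mul_nonneg (sd_nonneg G x) (sd_nonneg G v)) (smat_pow_nonneg G k x v)

lemma wt_symm (k : ℕ) (x v : V) : Wt G k x v = Wt G k v x := by
  unfold Wt
  have hsym : (Smat G ^ k) x v = (Smat G ^ k) v x := by
    have h := ((smat_symm G).pow k).symm
    calc (Smat G ^ k) x v = ((Smat G ^ k).conjTranspose) x v := by rw [(smat_symm G).pow k]
      _ = (Smat G ^ k) v x := by simp [Matrix.conjTranspose_apply]
  rw [hsym]; ring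

lemma wt_rowsum (hdeg : ∀ v, 0 < G.degree v) (k : ℕ) (x : V) :
    ∑ v, Wt G k x v = G.degree x := by
  unfold Wt
  calc ∑ v, sd G x * sd G v * (Smat G ^ k) x v
      = sd G x * ∑ v, (Smat G ^ k) x v * sd G v := by
        rw [Finset.mul_sum]
        exact Finset.sum_congr rfl fun v _ => by ring
    _ = (G.degree x : ℝ) := by rw [smat_rowsum G hdeg k x, sd_sq]

lemma wt_one (hdeg : ∀ v, 0 < G.degree v) (x v : V) :
    Wt G 1 x v = if G.Adj x v then 1 else 0 := by
  unfold Wt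
  rw [pow_one]
  simp only [Smat, Matrix.of_apply]
  by_cases h : G.Adj x v
  · have hdx : 0 < G.degree x := by
      rw [← SimpleGraph.card_neighborFinset_eq_degree]
      exact Finset.card_pos.mpr ⟨v, (SimpleGraph.mem_neighborFinset G x v).mpr h⟩
    have hdv : 0 < G.degree v := by
      rw [← SimpleGraph.card_neighborFinset_eq_degree]
      exact Finset.card_pos.mpr ⟨x, (SimpleGraph.mem_neighborFinset G v x).mpr h.symm⟩
    have hx : sd G x ≠ 0 := by
      have : (0:ℝ) < G.degree x := by exact_mod_cast hdx
      simp only [sd]; positivity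
    have hv : sd G v ≠ 0 := by
      have : (0:ℝ) < G.degree v := by exact_mod_cast hdv
      simp only [sd]; positivity
    rw [if_pos h, if_pos h]
    field_simp
  · simp [h]

lemma wt_step (k : ℕ) (x v : V) :
    Wt G (k + 1) x v = ∑ u, Wt G k x u * (if G.Adj u v then ((G.degree u : ℝ))⁻¹ else 0) := by
  unfold Wt
  rw [pow_succ, Matrix.mul_apply, Finset.mul_sum]
  apply Finset.sum_congr rfl
  intro u _
  by_cases h : G.Adj u v
  · have hdu : 0 < G.degree u := by
      rw [← SimpleGraph.card_neighborFinset_eq_degree]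
      exact Finset.card_pos.mpr ⟨v, (SimpleGraph.mem_neighborFinset G u v).mpr h⟩
    have hdv : 0 < G.degree v := by
      rw [← SimpleGraph.card_neighborFinset_eq_degree]
      exact Finset.card_pos.mpr ⟨u, (SimpleGraph.mem_neighborFinset G v u).mpr h.symm⟩
    have hu : sd G u ≠ 0 := by
      have : (0:ℝ) < G.degree u := by exact_mod_cast hdu
      simp only [sd]; positivity
    have hv : sd G v ≠ 0 := by
      have : (0:ℝ) < G.degree v := by exact_mod_cast hdv
      simp only [sd]; positivity
    simp only [Smat, Matrix.of_apply, if_pos h]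
    rw [← sd_sq G u]
    field_simp
  · simp [Smat, h]


lemma girth_cycles (g : ℕ) (hg : 0 < g) (hgirth : (g : ℕ∞) ≤ G.girth)
    {u : V} (w : G.Walk u u) (hw : w.IsCycle) : g ≤ w.length := by
  have hac : ¬ G.IsAcyclic := fun h => h w hw
  have hne : G.egirth ≠ ⊤ := fun h => hac (egirth_eq_top.mp h)
  have h1 : G.egirth ≤ (w.length : ℕ∞) := le_egirth.mp le_rfl u w hw
  have h2 : (G.girth : ℕ∞) = G.egirth := ENat.coe_toNat hne
  have h3 : (g : ℕ∞) ≤ (w.length : ℕ∞) := le_trans (h2 ▸ hgirth) h1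
  exact_mod_cast h3

lemma no_two_close (hconn : G.Connected) (g : ℕ)
    (hg : ∀ (u : V) (w : G.Walk u u), w.IsCycle → g ≤ w.length)
    (x u v₁ v₂ : V) (h1 : G.Adj u v₁) (h2 : G.Adj u v₂) (hne : v₁ ≠ v₂)
    (hd1 : G.dist x v₁ ≤ G.dist x u) (hd2 : G.dist x v₂ ≤ G.dist x u)
    (hlen : 2 * G.dist x u + 2 < g) : False := by
  obtain ⟨p₁, hp₁len⟩ := hconn.exists_walk_length_eq_dist x v₁
  obtain ⟨p₂, hp₂len⟩ := hconn.exists_walk_length_eq_dist x v₂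
  have hu₁ : u ∉ p₁.support := by
    intro hmem
    have h3 : G.dist x u ≤ (p₁.takeUntil u hmem).length := dist_le _
    have h4 : G.dist u v₁ ≤ (p₁.dropUntil u hmem).length := dist_le _
    have h5 : (p₁.takeUntil u hmem).length + (p₁.dropUntil u hmem).length = p₁.length := by
      have := congr_arg Walk.length (p₁.take_spec hmem)
      rwa [Walk.length_append] at this
    have h6 : G.dist u v₁ = 1 := dist_eq_one_iff_adj.mpr h1
    omega
  have hu₂ : u ∉ p₂.support := by
    intro hmem
    have h3 : G.dist x u ≤ (p₂.takeUntil u hmem).length := dist_le _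
    have h4 : G.dist u v₂ ≤ (p₂.dropUntil u hmem).length := dist_le _
    have h5 : (p₂.takeUntil u hmem).length + (p₂.dropUntil u hmem).length = p₂.length := by
      have := congr_arg Walk.length (p₂.take_spec hmem)
      rwa [Walk.length_append] at this
    have h6 : G.dist u v₂ = 1 := dist_eq_one_iff_adj.mpr h2
    omega
  set w : G.Walk u v₁ := Walk.cons h2 (p₂.reverse.append p₁) with hw
  have hedge : s(u, v₁) ∉ w.edges := by
    rw [hw, Walk.edges_cons, Walk.edges_append, Walk.edges_reverse]
    intro hmem
    rcases List.mem_cons.mp hmem with h | h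
    · rw [Sym2.eq_iff] at h
      rcases h with ⟨-, h⟩ | ⟨h, -⟩
      · exact hne h
      · exact G.irrefl (h ▸ h2)
    · rcases List.mem_append.mp h with h | h
      · exact hu₂ (p₂.fst_mem_support_of_mem_edges (List.mem_reverse.mp h))
      · exact hu₁ (p₁.fst_mem_support_of_mem_edges h)
  have hqpath : w.bypass.IsPath := Walk.bypass_isPath w
  have hqe : s(u, v₁) ∉ w.bypass.edges := fun h => hedge (Walk.edges_bypass_subset w h)
  set c : G.Walk u u := Walk.cons h1 w.bypass.reverse with hc
  have hcyc : c.IsCycle := by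
    rw [hc, Walk.cons_isCycle_iff]
    refine ⟨hqpath.reverse, fun h => hqe ?_⟩
    rw [Walk.edges_reverse, List.mem_reverse] at h
    exact h
  have hclen : c.length ≤ 2 * G.dist x u + 2 := by
    have hb : w.bypass.length ≤ w.length := Walk.length_bypass_le w
    have hwlen : w.length = 1 + (p₂.length + p₁.length) := by
      rw [hw, Walk.length_cons, Walk.length_append, Walk.length_reverse]; omega
    have : c.length = w.bypass.length + 1 := by
      rw [hc, Walk.length_cons, Walk.length_reverse]
    omega
  have := hg u c hcyc
  omega

lemma core_sum (hconn : G.Connected) (g s : ℕ)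
    (hg : ∀ (u : V) (w : G.Walk u u), w.IsCycle → g ≤ w.length)
    (hs2 : 2 * s < g) (x u : V) (hd : G.dist x u + 1 ≤ s) :
    (G.degree u : ℝ) * (G.dist x u) + (G.degree u) - 2
      ≤ ∑ v ∈ G.neighborFinset u, (G.dist x v : ℝ) := by
  set d₀ := G.dist x u with hd₀
  rcases Nat.eq_zero_or_pos d₀ with h0 | hpos
  · have hxu : x = u := hconn.dist_eq_zero_iff.mp h0
    have hb : ∀ v ∈ G.neighborFinset u, (1:ℝ) ≤ (G.dist x v : ℝ) := by
      intro v hv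
      rw [SimpleGraph.mem_neighborFinset] at hv
      have : G.dist x v ≠ 0 := by
        intro h
        have hxv := hconn.dist_eq_zero_iff.mp h
        rw [← hxu, ← hxv] at hv
        exact G.irrefl hv
      exact_mod_cast Nat.one_le_iff_ne_zero.mpr this
    have := Finset.sum_le_sum (s := G.neighborFinset u) (f := fun _ => (1:ℝ))
      (g := fun v => (G.dist x v : ℝ)) hb
    rw [Finset.sum_const, nsmul_eq_mul, mul_one, SimpleGraph.card_neighborFinset_eq_degree] at this
    rw [h0]
    push_cast
    linarith
  · set A := (G.neighborFinset u).filter (fun v => G.dist x v ≤ d₀) with hA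
    have hcard : A.card ≤ 1 := by
      by_contra hgt
      push_neg at hgt
      obtain ⟨v₁, hv₁, v₂, hv₂, hvne⟩ := Finset.one_lt_card.mp hgt
      rw [hA, Finset.mem_filter, SimpleGraph.mem_neighborFinset] at hv₁ hv₂
      exact no_two_close G hconn g hg x u v₁ v₂ hv₁.1 hv₂.1 hvne hv₁.2 hv₂.2 (by omega)
    have hsplit := Finset.sum_filter_add_sum_filter_not (G.neighborFinset u)
      (fun v => G.dist x v ≤ d₀) (fun v => (G.dist x v : ℝ))
    have hbA : ∀ v ∈ A, (d₀ : ℝ) - 1 ≤ (G.dist x v : ℝ) := by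
      intro v hv
      rw [hA, Finset.mem_filter, SimpleGraph.mem_neighborFinset] at hv
      have htri : G.dist x u ≤ G.dist x v + G.dist v u := hconn.dist_triangle
      have hvu : G.dist v u = 1 := dist_eq_one_iff_adj.mpr hv.1.symm
      have : d₀ ≤ G.dist x v + 1 := by omega
      have := (Nat.cast_le (α := ℝ)).mpr this
      push_cast at this ⊢
      linarith
    have hbB : ∀ v ∈ (G.neighborFinset u).filter (fun v => ¬ G.dist x v ≤ d₀),
        (d₀ : ℝ) + 1 ≤ (G.dist x v : ℝ) := by
      intro v hv
      rw [Finset.mem_filter] at hv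
      have : d₀ + 1 ≤ G.dist x v := by omega
      exact_mod_cast this
    have h1 : A.card • ((d₀:ℝ) - 1) ≤ ∑ v ∈ A, (G.dist x v : ℝ) :=
      Finset.card_nsmul_le_sum A _ _ hbA
    have h2 : ((G.neighborFinset u).filter (fun v => ¬ G.dist x v ≤ d₀)).card • ((d₀:ℝ) + 1)
        ≤ ∑ v ∈ (G.neighborFinset u).filter (fun v => ¬ G.dist x v ≤ d₀), (G.dist x v : ℝ) :=
      Finset.card_nsmul_le_sum _ _ _ hbB
    have hcards : A.card + ((G.neighborFinset u).filter (fun v => ¬ G.dist x v ≤ d₀)).card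
        = G.degree u := by
      rw [hA, Finset.card_filter_add_card_filter_not,
        SimpleGraph.card_neighborFinset_eq_degree]
    have hAle : (A.card : ℝ) ≤ 1 := by exact_mod_cast hcard
    have hd₀1 : (1:ℝ) ≤ (d₀ : ℝ) := by exact_mod_cast hpos
    rw [nsmul_eq_mul] at h1 h2
    have hcR : (A.card : ℝ) + (((G.neighborFinset u).filter (fun v => ¬ G.dist x v ≤ d₀)).card : ℝ)
        = (G.degree u : ℝ) := by exact_mod_cast hcards
    nlinarith [h1, h2, hsplit, hcR, hAle, hd₀1]

lemma smat_entry_symm (x v : V) : Smat G x v = Smat G v x := by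
  simp only [Smat, Matrix.of_apply]
  rw [mul_comm (sd G x)]
  exact if_congr (G.adj_comm x v) rfl rfl

lemma nbr_swap (F : V → V → ℝ) :
    ∑ x, ∑ v ∈ G.neighborFinset x, F x v = ∑ x, ∑ v ∈ G.neighborFinset x, F v x := by
  have h1 : ∀ (H : V → V → ℝ), ∑ x, ∑ v ∈ G.neighborFinset x, H x v
      = ∑ x, ∑ v, if G.Adj x v then H x v else 0 := by
    intro H
    refine Finset.sum_congr rfl fun x _ => ?_
    rw [SimpleGraph.neighborFinset_eq_filter, Finset.sum_filter]
  rw [h1, h1, Finset.sum_comm]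
  refine Finset.sum_congr rfl fun x _ => Finset.sum_congr rfl fun v _ => ?_
  exact if_congr (G.adj_comm v x) rfl rfl

lemma quad_bound (hdeg : ∀ v, 0 < G.degree v) (w : V → ℝ) :
    |∑ x, ∑ v, Smat G x v * w x * w v| ≤ ∑ x, w x ^ 2 := by
  set b : V → ℝ := fun x => w x / sd G x with hb
  have hsd : ∀ x, sd G x ≠ 0 := fun x => (sd_pos G hdeg x).ne'
  have hw : ∀ x, w x = sd G x * b x := by
    intro x
    rw [hb]
    rw [mul_comm, div_mul_cancel₀ _ (hsd x)]
  have key1 : ∑ x, w x ^ 2 = ∑ x, ∑ v ∈ G.neighborFinset x, b x ^ 2 := by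
    refine Finset.sum_congr rfl fun x _ => ?_
    rw [Finset.sum_const, SimpleGraph.card_neighborFinset_eq_degree, nsmul_eq_mul,
      hw x, mul_pow, ← sd_sq G x]
    ring
  have key2 : ∑ x, ∑ v, Smat G x v * w x * w v
      = ∑ x, ∑ v ∈ G.neighborFinset x, b x * b v := by
    refine Finset.sum_congr rfl fun x _ => ?_
    rw [SimpleGraph.neighborFinset_eq_filter, Finset.sum_filter]
    refine Finset.sum_congr rfl fun v _ => ?_
    by_cases h : G.Adj x v
    · rw [if_pos h]
      simp only [Smat, Matrix.of_apply, if_pos h]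
      rw [hw x, hw v]
      rw [show (sd G x * sd G v)⁻¹ * (sd G x * b x) * (sd G v * b v)
        = (sd G x / sd G x) * ((sd G v / sd G v) * (b x * b v)) from by ring]
      rw [div_self (hsd x), div_self (hsd v), one_mul, one_mul]
    · rw [if_neg h]
      simp [Smat, h]
  have swap2 : ∑ x, ∑ v ∈ G.neighborFinset x, b v ^ 2
      = ∑ x, ∑ v ∈ G.neighborFinset x, b x ^ 2 :=
    nbr_swap G (fun x v => b v ^ 2)
  have pos1 : (0:ℝ) ≤ ∑ x, ∑ v ∈ G.neighborFinset x, (b x + b v) ^ 2 :=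
    Finset.sum_nonneg fun x _ => Finset.sum_nonneg fun v _ => sq_nonneg _
  have pos2 : (0:ℝ) ≤ ∑ x, ∑ v ∈ G.neighborFinset x, (b x - b v) ^ 2 :=
    Finset.sum_nonneg fun x _ => Finset.sum_nonneg fun v _ => sq_nonneg _
  have expand1 : ∑ x, ∑ v ∈ G.neighborFinset x, (b x + b v) ^ 2
      = ∑ x, ∑ v ∈ G.neighborFinset x, b x ^ 2 + ∑ x, ∑ v ∈ G.neighborFinset x, b v ^ 2
        + 2 * ∑ x, ∑ v ∈ G.neighborFinset x, b x * b v := by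
    have hin : ∀ x : V, ∑ v ∈ G.neighborFinset x, (b x + b v) ^ 2
        = ∑ v ∈ G.neighborFinset x, b x ^ 2 + ∑ v ∈ G.neighborFinset x, b v ^ 2
          + 2 * ∑ v ∈ G.neighborFinset x, b x * b v := by
      intro x
      rw [Finset.mul_sum, ← Finset.sum_add_distrib, ← Finset.sum_add_distrib]
      exact Finset.sum_congr rfl fun v _ => by ring
    rw [Finset.sum_congr rfl fun x _ => hin x, Finset.sum_add_distrib,
      Finset.sum_add_distrib, ← Finset.mul_sum]
  have expand2 : ∑ x, ∑ v ∈ G.neighborFinset x, (b x - b v) ^ 2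
      = ∑ x, ∑ v ∈ G.neighborFinset x, b x ^ 2 + ∑ x, ∑ v ∈ G.neighborFinset x, b v ^ 2
        - 2 * ∑ x, ∑ v ∈ G.neighborFinset x, b x * b v := by
    have hin : ∀ x : V, ∑ v ∈ G.neighborFinset x, (b x - b v) ^ 2
        = (∑ v ∈ G.neighborFinset x, b x ^ 2 + ∑ v ∈ G.neighborFinset x, b v ^ 2)
          - 2 * ∑ v ∈ G.neighborFinset x, b x * b v := by
      intro x
      rw [Finset.mul_sum, ← Finset.sum_add_distrib, ← Finset.sum_sub_distrib]
      exact Finset.sum_congr rfl fun v _ => by ring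
    rw [Finset.sum_congr rfl fun x _ => hin x, Finset.sum_sub_distrib,
      Finset.sum_add_distrib, ← Finset.mul_sum]
  rw [key1, key2]
  rw [swap2] at expand1 expand2
  rw [abs_le]
  constructor <;> nlinarith [pos1, pos2]

lemma eig_abs_le_one (hdeg : ∀ v, 0 < G.degree v) (i : V) :
    |(smat_symm G).eigenvalues i| ≤ 1 := by
  set q : V → ℝ := ⇑((smat_symm G).eigenvectorBasis i) with hq
  have hmv : Smat G *ᵥ q = (smat_symm G).eigenvalues i • q := by
    rw [hq]; exact (smat_symm G).mulVec_eigenvectorBasis i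
  have h1 : Real.sqrt (∑ x, ‖q x‖ ^ 2) = 1 := by
    rw [hq, ← EuclideanSpace.norm_eq]
    exact (smat_symm G).eigenvectorBasis.orthonormal.1 i
  have hnorm : ∑ x, q x ^ 2 = 1 := by
    have h2 : ∑ x, ‖q x‖ ^ 2 = 1 := by
      have h3 := congr_arg (fun t : ℝ => t ^ 2) h1
      simp only [one_pow] at h3
      rw [← h3, Real.sq_sqrt (Finset.sum_nonneg fun x _ => sq_nonneg _)]
    rw [← h2]
    exact Finset.sum_congr rfl fun x _ => by rw [Real.norm_eq_abs, sq_abs]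
  have hquad : ∑ x, ∑ v, Smat G x v * q x * q v = (smat_symm G).eigenvalues i := by
    have h3 : ∑ x, ∑ v, Smat G x v * q x * q v = ∑ x, q x * ((Smat G) *ᵥ q) x := by
      refine Finset.sum_congr rfl fun x _ => ?_
      simp only [Matrix.mulVec, dotProduct]
      rw [Finset.mul_sum]
      exact Finset.sum_congr rfl fun v _ => by ring
    rw [h3, hmv]
    simp only [Pi.smul_apply, smul_eq_mul]
    rw [Finset.sum_congr rfl fun x _ => (by ring :
      q x * ((smat_symm G).eigenvalues i * q x) = (smat_symm G).eigenvalues i * q x ^ 2),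
      ← Finset.mul_sum, hnorm, mul_one]
  rw [← hquad, ← hnorm]
  exact quad_bound G hdeg q

lemma spec_entry (k : ℕ) (x v : V) :
    (Smat G ^ k) x v = ∑ i, ((smat_symm G).eigenvalues i) ^ k
      * ((smat_symm G).eigenvectorBasis i) x * ((smat_symm G).eigenvectorBasis i) v := by
  induction k generalizing x v with
  | zero =>
    simp only [pow_zero, Matrix.one_apply, one_mul]
    have h := OrthonormalBasis.sum_inner_mul_inner ((smat_symm G).eigenvectorBasis)
      (EuclideanSpace.single x (1:ℝ)) (EuclideanSpace.single v (1:ℝ))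
    have hx : ∀ i, (inner ℝ (EuclideanSpace.single x (1:ℝ)) ((smat_symm G).eigenvectorBasis i) : ℝ)
        = ((smat_symm G).eigenvectorBasis i) x := by
      intro i
      rw [EuclideanSpace.inner_single_left]
      simp
    have hv : ∀ i, (inner ℝ ((smat_symm G).eigenvectorBasis i) (EuclideanSpace.single v (1:ℝ)) : ℝ)
        = ((smat_symm G).eigenvectorBasis i) v := by
      intro i
      rw [EuclideanSpace.inner_single_right]
      simp
    have hxv : (inner ℝ (EuclideanSpace.single x (1:ℝ)) (EuclideanSpace.single v (1:ℝ)) : ℝ)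
        = if x = v then 1 else 0 := by
      rw [EuclideanSpace.inner_single_left]
      simp [EuclideanSpace.single_apply, eq_comm]
    rw [hxv] at h
    rw [← h]
    exact Finset.sum_congr rfl fun i _ => by rw [hx i, hv i]
  | succ k ih =>
    rw [pow_succ, Matrix.mul_apply]
    have step : ∀ u, (Smat G ^ k) x u * Smat G u v
        = ∑ i, ((smat_symm G).eigenvalues i) ^ k * ((smat_symm G).eigenvectorBasis i) x
            * (((smat_symm G).eigenvectorBasis i) u * Smat G u v) := by
      intro u
      rw [ih x u, Finset.sum_mul]
      exact Finset.sum_congr rfl fun i _ => by ring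
    rw [Finset.sum_congr rfl fun u _ => step u, Finset.sum_comm]
    refine Finset.sum_congr rfl fun i _ => ?_
    have hcol : ∑ u, ((smat_symm G).eigenvectorBasis i) u * Smat G u v
        = (smat_symm G).eigenvalues i * ((smat_symm G).eigenvectorBasis i) v := by
      have h1 : ∑ u, ((smat_symm G).eigenvectorBasis i) u * Smat G u v
          = ((Smat G) *ᵥ ⇑((smat_symm G).eigenvectorBasis i)) v := by
        rw [Matrix.mulVec, dotProduct]
        refine Finset.sum_congr rfl fun u _ => ?_
        rw [smat_entry_symm G v u, mul_comm]
      rw [h1, (smat_symm G).mulVec_eigenvectorBasis i]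
      simp
    calc ∑ u, ((smat_symm G).eigenvalues i) ^ k * ((smat_symm G).eigenvectorBasis i) x
            * (((smat_symm G).eigenvectorBasis i) u * Smat G u v)
        = ((smat_symm G).eigenvalues i) ^ k * ((smat_symm G).eigenvectorBasis i) x
            * ∑ u, ((smat_symm G).eigenvectorBasis i) u * Smat G u v := by
          rw [Finset.mul_sum]
      _ = ((smat_symm G).eigenvalues i) ^ (k+1) * ((smat_symm G).eigenvectorBasis i) x
            * ((smat_symm G).eigenvectorBasis i) v := by
          rw [hcol]; ring

lemma scalar_ineq (t : ℕ) (l : ℝ) (h : |l| ≤ 1) : 1 - l ^ t ≤ t * (1 - l) := by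
  have h2 : 0 ≤ 1 - l := by
    have := (abs_le.mp h).2
    linarith
  induction t with
  | zero => simp
  | succ t ih =>
    have h1 : l ^ t ≤ 1 := by
      calc l ^ t ≤ |l ^ t| := le_abs_self _
        _ = |l| ^ t := abs_pow l t
        _ ≤ 1 := pow_le_one₀ (abs_nonneg l) h
    have : 1 - l ^ (t+1) = (1 - l ^ t) + l ^ t * (1 - l) := by ring
    rw [this]
    push_cast
    nlinarith

lemma markov_type (hdeg : ∀ v, 0 < G.degree v) (t : ℕ)
    (f : V → lp (fun _ : ℕ => ℝ) 2) :
    ∑ x, ∑ v, Wt G t x v * ‖f x - f v‖ ^ 2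
      ≤ (t : ℝ) * ∑ x, ∑ v, Wt G 1 x v * ‖f x - f v‖ ^ 2 := by
  classical
  set z : V → lp (fun _ : ℕ => ℝ) 2 := fun x => sd G x • f x with hz
  set q : V → V → ℝ := fun i x => ((smat_symm G).eigenvectorBasis i) x with hqdef
  set lam : V → ℝ := (smat_symm G).eigenvalues with hlam
  have hq' : ∀ i x, ((smat_symm G).eigenvectorBasis i) x = q i x := fun _ _ => rfl
  have hlam' : ∀ i, (smat_symm G).eigenvalues i = lam i := fun _ => rfl
  set h : V → lp (fun _ : ℕ => ℝ) 2 := fun i => ∑ x, q i x • z x with hh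
  set N : ℝ := ∑ x, ‖z x‖ ^ 2 with hN
  have hzinner : ∀ x v, (inner ℝ (z x) (z v) : ℝ) = sd G x * sd G v * (inner ℝ (f x) (f v) : ℝ) := by
    intro x v
    rw [hz]
    rw [real_inner_smul_left, real_inner_smul_right]
    ring
  have hznorm : ∀ x, ‖z x‖ ^ 2 = (G.degree x : ℝ) * ‖f x‖ ^ 2 := by
    intro x
    rw [hz, norm_smul, Real.norm_eq_abs, abs_of_nonneg (sd_nonneg G x), mul_pow, sq, sd_sq]
  have hhinner : ∀ i, ‖h i‖ ^ 2 = ∑ x, ∑ v, q i x * q i v * (inner ℝ (z x) (z v) : ℝ) := by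
    intro i
    rw [← real_inner_self_eq_norm_sq, hh]
    rw [sum_inner]
    refine Finset.sum_congr rfl fun x _ => ?_
    rw [real_inner_smul_left, inner_sum, Finset.mul_sum]
    refine Finset.sum_congr rfl fun v _ => ?_
    rw [real_inner_smul_right]
    ring
  have hB : ∀ k, ∑ x, ∑ v, (Smat G ^ k) x v * (inner ℝ (z x) (z v) : ℝ)
      = ∑ i, lam i ^ k * ‖h i‖ ^ 2 := by
    intro k
    have step1 : ∀ x v, (Smat G ^ k) x v * (inner ℝ (z x) (z v) : ℝ)
        = ∑ i, lam i ^ k * (q i x * q i v * (inner ℝ (z x) (z v) : ℝ)) := by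
      intro x v
      rw [spec_entry G k x v, Finset.sum_mul]
      refine Finset.sum_congr rfl fun i _ => ?_
      rw [hq' i x, hq' i v, hlam' i]
      ring
    calc ∑ x, ∑ v, (Smat G ^ k) x v * (inner ℝ (z x) (z v) : ℝ)
        = ∑ x, ∑ v, ∑ i, lam i ^ k * (q i x * q i v * (inner ℝ (z x) (z v) : ℝ)) :=
          Finset.sum_congr rfl fun x _ => Finset.sum_congr rfl fun v _ => step1 x v
      _ = ∑ x, ∑ i, ∑ v, lam i ^ k * (q i x * q i v * (inner ℝ (z x) (z v) : ℝ)) :=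
          Finset.sum_congr rfl fun x _ => Finset.sum_comm
      _ = ∑ i, ∑ x, ∑ v, lam i ^ k * (q i x * q i v * (inner ℝ (z x) (z v) : ℝ)) :=
          Finset.sum_comm
      _ = ∑ i, lam i ^ k * ‖h i‖ ^ 2 := by
          refine Finset.sum_congr rfl fun i _ => ?_
          rw [hhinner i, Finset.mul_sum]
          refine Finset.sum_congr rfl fun x _ => ?_
          rw [Finset.mul_sum]
  have hNsum : N = ∑ i, ‖h i‖ ^ 2 := by
    have h0 := hB 0
    simp only [pow_zero, one_mul] at h0
    rw [← h0, hN]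
    refine Finset.sum_congr rfl fun x _ => ?_
    refine Eq.symm ?_
    have hone : ∀ v, (1 : Matrix V V ℝ) x v * (inner ℝ (z x) (z v) : ℝ)
        = if v = x then ‖z x‖ ^ 2 else 0 := by
      intro v
      rw [Matrix.one_apply]
      by_cases hxv : x = v
      · subst hxv
        rw [if_pos rfl, if_pos rfl, one_mul, real_inner_self_eq_norm_sq]
      · rw [if_neg hxv, if_neg (Ne.symm hxv), zero_mul]
    rw [Finset.sum_congr rfl fun v _ => hone v, Finset.sum_ite_eq' Finset.univ x
      (fun _ => ‖z x‖ ^ 2), if_pos (Finset.mem_univ x)]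
  have hE : ∀ k, ∑ x, ∑ v, Wt G k x v * ‖f x - f v‖ ^ 2
      = 2 * N - 2 * ∑ i, lam i ^ k * ‖h i‖ ^ 2 := by
    intro k
    rw [← hB k]
    have expand : ∀ x v, Wt G k x v * ‖f x - f v‖ ^ 2
        = Wt G k x v * ‖f x‖ ^ 2 + Wt G k x v * ‖f v‖ ^ 2
          - 2 * ((Smat G ^ k) x v * (inner ℝ (z x) (z v) : ℝ)) := by
      intro x v
      have hns : ‖f x - f v‖ ^ 2 = ‖f x‖ ^ 2 - 2 * (inner ℝ (f x) (f v) : ℝ) + ‖f v‖ ^ 2 :=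
        norm_sub_sq_real (f x) (f v)
      rw [hns, hzinner x v]
      unfold Wt
      ring
    rw [Finset.sum_congr rfl fun x _ => Finset.sum_congr rfl fun v _ => expand x v]
    have split : ∀ x : V, ∑ v, (Wt G k x v * ‖f x‖ ^ 2 + Wt G k x v * ‖f v‖ ^ 2
          - 2 * ((Smat G ^ k) x v * (inner ℝ (z x) (z v) : ℝ)))
        = ((∑ v, Wt G k x v * ‖f x‖ ^ 2) + (∑ v, Wt G k x v * ‖f v‖ ^ 2))
          - 2 * ∑ v, (Smat G ^ k) x v * (inner ℝ (z x) (z v) : ℝ) := by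
      intro x
      rw [Finset.mul_sum, ← Finset.sum_add_distrib, ← Finset.sum_sub_distrib]
    rw [Finset.sum_congr rfl fun x _ => split x]
    rw [Finset.sum_sub_distrib, Finset.sum_add_distrib, ← Finset.mul_sum]
    have t1 : ∑ x : V, ∑ v, Wt G k x v * ‖f x‖ ^ 2 = N := by
      rw [hN]
      refine Finset.sum_congr rfl fun x _ => ?_
      rw [← Finset.sum_mul, wt_rowsum G hdeg k x, hznorm x]
    have t2 : ∑ x : V, ∑ v, Wt G k x v * ‖f v‖ ^ 2 = N := by
      rw [Finset.sum_comm, hN]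
      refine Finset.sum_congr rfl fun v _ => ?_
      have hswap : ∀ x, Wt G k x v = Wt G k v x := fun x => wt_symm G k x v
      rw [Finset.sum_congr rfl fun x _ => congrArg (· * ‖f v‖ ^ 2) (hswap x),
        ← Finset.sum_mul, wt_rowsum G hdeg k v, hznorm v]
    rw [t1, t2]
    ring
  rw [hE t, hE 1]
  have hterm : ∀ i, (1 - lam i ^ t) * ‖h i‖ ^ 2 ≤ (t : ℝ) * ((1 - lam i ^ 1) * ‖h i‖ ^ 2) := by
    intro i
    have habs := eig_abs_le_one G hdeg i
    have hsc := scalar_ineq t (lam i) habs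
    have hh2 : (0:ℝ) ≤ ‖h i‖ ^ 2 := sq_nonneg _
    rw [pow_one]
    nlinarith
  have hsum := Finset.sum_le_sum (fun i (_ : i ∈ Finset.univ) => hterm i)
  rw [← Finset.mul_sum] at hsum
  have e1 : ∑ i, (1 - lam i ^ t) * ‖h i‖ ^ 2 = N - ∑ i, lam i ^ t * ‖h i‖ ^ 2 := by
    rw [hNsum, ← Finset.sum_sub_distrib]
    exact Finset.sum_congr rfl fun i _ => by ring
  have e2 : ∑ i, (1 - lam i ^ 1) * ‖h i‖ ^ 2 = N - ∑ i, lam i ^ 1 * ‖h i‖ ^ 2 := by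
    rw [hNsum, ← Finset.sum_sub_distrib]
    exact Finset.sum_congr rfl fun i _ => by ring
  rw [e1, e2] at hsum
  have hpow1 : ∑ i, lam i ^ 1 * ‖h i‖ ^ 2 = ∑ i, lam i * ‖h i‖ ^ 2 := by
    refine Finset.sum_congr rfl fun i _ => by rw [pow_one]
  nlinarith [hsum]


lemma deg_pos (hconn : G.Connected) (hcard : 1 < Fintype.card V) (v : V) :
    0 < G.degree v := by
  obtain ⟨w, hw⟩ := Fintype.exists_ne_of_one_lt_card hcard v
  obtain ⟨p⟩ := hconn.preconnected v w
  cases p with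
  | nil => exact absurd rfl hw.symm
  | cons h _ =>
    rw [← SimpleGraph.card_neighborFinset_eq_degree]
    exact Finset.card_pos.mpr ⟨_, (SimpleGraph.mem_neighborFinset G v _).mpr h⟩

theorem main_aux (g s : ℕ) (δ : ℝ)
    (hconn : G.Connected) (hgirth : (g : ℕ∞) ≤ G.girth)
    (hδ : δ = 2 * (G.edgeFinset.card : ℝ) / (Fintype.card V : ℝ))
    (hs1 : 1 < s) (hs2 : 2 * s < g)
    (f : V → lp (fun _ : ℕ => ℝ) 2) (α r : ℝ) (hα : 1 ≤ α) (hr : 0 < r)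
    (hf : ∀ u v : V, G.dist u v ≤ s →
      r * (G.dist u v : ℝ) ≤ ‖f u - f v‖ ∧ ‖f u - f v‖ ≤ α * r * (G.dist u v : ℝ)) :
    (δ - 2) / δ * Real.sqrt s ≤ α := by
  classical
  have hδnn : 0 ≤ δ := by
    rw [hδ]
    positivity
  rcases le_or_gt δ 2 with hδ2 | hδ2
  · -- trivial case
    rcases eq_or_lt_of_le hδnn with h0 | h0
    · rw [← h0, zero_sub, div_zero, zero_mul]
      linarith
    · have h1 : (δ - 2) / δ ≤ 0 := div_nonpos_of_nonpos_of_nonneg (by linarith) (le_of_lt h0)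
      have := mul_nonpos_of_nonpos_of_nonneg h1 (Real.sqrt_nonneg (s:ℝ))
      linarith
  -- main case
  set n := Fintype.card V with hn
  set m := G.edgeFinset.card with hm
  have hnpos : 0 < n := by
    have : Nonempty V := hconn.nonempty
    exact Fintype.card_pos
  have hnm : n < m := by
    have hnR : (0:ℝ) < n := by exact_mod_cast hnpos
    have h1 : (2:ℝ) < 2 * m / n := by rw [hδ] at hδ2; exact_mod_cast hδ2
    rw [lt_div_iff₀ hnR] at h1
    have : (n:ℝ) < m := by linarith
    exact_mod_cast this
  have hmpos : 0 < m := lt_trans hnpos hnm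
  have hcard : 1 < n := by
    obtain ⟨e, he⟩ := Finset.card_pos.mp hmpos
    rw [SimpleGraph.mem_edgeFinset] at he
    induction e with
    | h a b =>
      have hadj : G.Adj a b := he
      exact Fintype.one_lt_card_iff.mpr ⟨a, b, hadj.ne⟩
  have hdeg : ∀ v, 0 < G.degree v := deg_pos G hconn hcard
  have hgc : ∀ (u : V) (w : G.Walk u u), w.IsCycle → g ≤ w.length :=
    fun u w hw => girth_cycles G g (by omega) hgirth w hw
  have hsum2m : ∑ v, (G.degree v : ℝ) = 2 * m := by
    have := SimpleGraph.sum_degrees_eq_twice_card_edges G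
    exact_mod_cast congrArg (Nat.cast : ℕ → ℝ) this
  -- total weight
  have htot : ∀ k, ∑ x, ∑ v, Wt G k x v = 2 * m := by
    intro k
    rw [Finset.sum_congr rfl fun x _ => wt_rowsum G hdeg k x, hsum2m]
  have hcolinv : ∀ k, ∑ x, ∑ v, Wt G k x v * ((G.degree v : ℝ))⁻¹ = n := by
    intro k
    rw [Finset.sum_comm]
    have : ∀ v : V, ∑ x, Wt G k x v * ((G.degree v : ℝ))⁻¹ = 1 := by
      intro v
      rw [← Finset.sum_mul]
      rw [Finset.sum_congr rfl fun x _ => wt_symm G k x v, wt_rowsum G hdeg k v]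
      exact mul_inv_cancel₀ (by exact_mod_cast (hdeg v).ne')
    rw [Finset.sum_congr rfl fun v _ => this v]
    simp [hn]
  -- the distance functional
  set D : ℕ → ℝ := fun k => ∑ x, ∑ v, Wt G k x v * (G.dist x v : ℝ) with hD
  have hstep : ∀ k, k + 1 ≤ s → D k + (2 * m - 2 * n) ≤ D (k + 1) := by
    intro k hk
    have hswap : D (k+1) = ∑ x, ∑ u, Wt G k x u *
        ∑ v, (if G.Adj u v then ((G.degree u : ℝ))⁻¹ else 0) * (G.dist x v : ℝ) := by
      rw [hD]
      refine Finset.sum_congr rfl fun x _ => ?_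
      rw [Finset.sum_congr rfl fun v _ => congrArg (· * ((G.dist x v : ℕ) : ℝ)) (wt_step G k x v)]
      rw [Finset.sum_congr rfl fun v _ => Finset.sum_mul Finset.univ
        (fun u => Wt G k x u * (if G.Adj u v then ((G.degree u : ℝ))⁻¹ else 0))
        ((G.dist x v : ℕ) : ℝ)]
      rw [Finset.sum_comm]
      refine Finset.sum_congr rfl fun u _ => ?_
      rw [Finset.mul_sum]
      refine Finset.sum_congr rfl fun v _ => ?_
      ring
    have hpt : ∀ x u : V, Wt G k x u * ((G.dist x u : ℝ) + 1 - 2 * ((G.degree u : ℝ))⁻¹)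
        ≤ Wt G k x u * ∑ v, (if G.Adj u v then ((G.degree u : ℝ))⁻¹ else 0) * (G.dist x v : ℝ) := by
      intro x u
      rcases eq_or_ne (Wt G k x u) 0 with hz | hz
      · rw [hz, zero_mul, zero_mul]
      · have hWpos : 0 < Wt G k x u := lt_of_le_of_ne (wt_nonneg G k x u) (Ne.symm hz)
        apply mul_le_mul_of_nonneg_left _ (le_of_lt hWpos)
        -- key pointwise bound
        have hdk : G.dist x u ≤ k := by
          apply smat_pow_dist G hconn k x u
          intro hSz
          exact hz (by unfold Wt; rw [hSz, mul_zero])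
        have hcore := core_sum G hconn g s hgc hs2 x u (by omega)
        have hdu : (0:ℝ) < (G.degree u : ℝ) := by exact_mod_cast hdeg u
        have hsum : ∑ v, (if G.Adj u v then ((G.degree u : ℝ))⁻¹ else 0) * (G.dist x v : ℝ)
            = ((G.degree u : ℝ))⁻¹ * ∑ v ∈ G.neighborFinset u, (G.dist x v : ℝ) := by
          rw [SimpleGraph.neighborFinset_eq_filter, Finset.sum_filter, Finset.mul_sum]
          refine Finset.sum_congr rfl fun v _ => ?_
          by_cases h : G.Adj u v
          · rw [if_pos h, if_pos h]
          · rw [if_neg h, if_neg h, zero_mul, mul_zero]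
        rw [hsum]
        rw [← sub_nonneg] at hcore ⊢
        calc (0:ℝ) ≤ ((G.degree u : ℝ))⁻¹ * ((∑ v ∈ G.neighborFinset u, (G.dist x v : ℝ))
              - ((G.degree u : ℝ) * (G.dist x u) + (G.degree u) - 2)) := by
              apply mul_nonneg (inv_nonneg.mpr (le_of_lt hdu))
              linarith
          _ = ((G.degree u : ℝ))⁻¹ * ∑ v ∈ G.neighborFinset u, (G.dist x v : ℝ)
              - ((G.dist x u : ℝ) + 1 - 2 * ((G.degree u : ℝ))⁻¹) := by
              field_simp
    have hlow : ∑ x, ∑ u, Wt G k x u * ((G.dist x u : ℝ) + 1 - 2 * ((G.degree u : ℝ))⁻¹)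
        = D k + (2 * m - 2 * n) := by
      have hexp : ∀ x u : V, Wt G k x u * ((G.dist x u : ℝ) + 1 - 2 * ((G.degree u : ℝ))⁻¹)
          = Wt G k x u * (G.dist x u : ℝ) + Wt G k x u
            - 2 * (Wt G k x u * ((G.degree u : ℝ))⁻¹) := by
        intro x u; ring
      rw [Finset.sum_congr rfl fun x _ => Finset.sum_congr rfl fun u _ => hexp x u]
      have hper : ∀ x : V, ∑ u, (Wt G k x u * (G.dist x u : ℝ) + Wt G k x u
            - 2 * (Wt G k x u * ((G.degree u : ℝ))⁻¹))
          = ((∑ u, Wt G k x u * (G.dist x u : ℝ)) + ∑ u, Wt G k x u)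
            - 2 * ∑ u, Wt G k x u * ((G.degree u : ℝ))⁻¹ := by
        intro x
        rw [Finset.mul_sum, ← Finset.sum_add_distrib, ← Finset.sum_sub_distrib]
      rw [Finset.sum_congr rfl fun x _ => hper x]
      rw [Finset.sum_sub_distrib, Finset.sum_add_distrib, ← Finset.mul_sum]
      have e1 : ∑ x, ∑ u, Wt G k x u * (G.dist x u : ℝ) = D k := by rw [hD]
      rw [e1, htot k, hcolinv k]
      ring
    calc D k + (2*m - 2*n)
        = ∑ x, ∑ u, Wt G k x u * ((G.dist x u : ℝ) + 1 - 2 * ((G.degree u : ℝ))⁻¹) := hlow.symm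
      _ ≤ ∑ x, ∑ u, Wt G k x u *
            ∑ v, (if G.Adj u v then ((G.degree u : ℝ))⁻¹ else 0) * (G.dist x v : ℝ) :=
          Finset.sum_le_sum fun x _ => Finset.sum_le_sum fun u _ => hpt x u
      _ = D (k+1) := hswap.symm
  have hmn0 : (0:ℝ) ≤ 2*(m:ℝ) - 2*(n:ℝ) := by
    have : (n:ℝ) ≤ m := by exact_mod_cast le_of_lt hnm
    linarith
  have hDt : ∀ k, k ≤ s → (k:ℝ) * (2*(m:ℝ) - 2*n) ≤ D k := by
    intro k
    induction k with
    | zero =>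
      intro _
      have hD0 : D 0 = 0 := by
        rw [hD]
        apply Finset.sum_eq_zero; intro x _
        apply Finset.sum_eq_zero; intro v _
        rcases eq_or_ne x v with h | h
        · subst h; simp [SimpleGraph.dist_self]
        · unfold Wt
          rw [pow_zero, Matrix.one_apply, if_neg h]
          ring
      rw [hD0]
      simp
    | succ k ih =>
      intro hks
      have h1 := ih (by omega)
      have h2 := hstep k hks
      push_cast
      push_cast at h1
      linarith
  have hDs : (s:ℝ) * (2*(m:ℝ) - 2*n) ≤ D s := hDt s le_rfl
  -- Cauchy-Schwarz
  set Sd2 : ℝ := ∑ x, ∑ v, Wt G s x v * ((G.dist x v : ℕ) : ℝ)^2 with hSd2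
  have hCS : (D s)^2 ≤ (2*(m:ℝ)) * Sd2 := by
    have flat1 : D s = ∑ p : V × V, Wt G s p.1 p.2 * ((G.dist p.1 p.2 : ℕ) : ℝ) := by
      rw [hD, Fintype.sum_prod_type]
    have flat2 : Sd2 = ∑ p : V × V, Wt G s p.1 p.2 * ((G.dist p.1 p.2 : ℕ) : ℝ)^2 := by
      rw [hSd2, Fintype.sum_prod_type]
    have flat3 : (2*(m:ℝ)) = ∑ p : V × V, Wt G s p.1 p.2 := by
      rw [← htot s, Fintype.sum_prod_type]
    have hcs := Finset.sum_mul_sq_le_sq_mul_sq Finset.univ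
      (fun p : V × V => Real.sqrt (Wt G s p.1 p.2))
      (fun p : V × V => Real.sqrt (Wt G s p.1 p.2) * ((G.dist p.1 p.2 : ℕ) : ℝ))
    have e1 : ∀ p : V × V, Real.sqrt (Wt G s p.1 p.2)
        * (Real.sqrt (Wt G s p.1 p.2) * ((G.dist p.1 p.2 : ℕ) : ℝ))
        = Wt G s p.1 p.2 * ((G.dist p.1 p.2 : ℕ) : ℝ) := by
      intro p
      rw [← mul_assoc, Real.mul_self_sqrt (wt_nonneg G s p.1 p.2)]
    have e2 : ∀ p : V × V, Real.sqrt (Wt G s p.1 p.2) ^ 2 = Wt G s p.1 p.2 :=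
      fun p => Real.sq_sqrt (wt_nonneg G s p.1 p.2)
    have e3 : ∀ p : V × V, (Real.sqrt (Wt G s p.1 p.2) * ((G.dist p.1 p.2 : ℕ) : ℝ))^2
        = Wt G s p.1 p.2 * ((G.dist p.1 p.2 : ℕ) : ℝ)^2 := by
      intro p
      rw [mul_pow, Real.sq_sqrt (wt_nonneg G s p.1 p.2)]
    rw [Finset.sum_congr rfl fun p _ => e1 p, Finset.sum_congr rfl fun p _ => e2 p,
      Finset.sum_congr rfl fun p _ => e3 p] at hcs
    rw [flat1, flat2, flat3]
    exact hcs
  -- lower bound on E s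
  have hlower : r^2 * Sd2 ≤ ∑ x, ∑ v, Wt G s x v * ‖f x - f v‖^2 := by
    rw [hSd2, Finset.mul_sum]
    apply Finset.sum_le_sum; intro x _
    rw [Finset.mul_sum]
    apply Finset.sum_le_sum; intro v _
    rcases eq_or_ne (Wt G s x v) 0 with hz | hz
    · rw [hz]
      simp
    · have hWpos : 0 < Wt G s x v := lt_of_le_of_ne (wt_nonneg G s x v) (Ne.symm hz)
      have hdist : G.dist x v ≤ s := by
        apply smat_pow_dist G hconn s x v
        intro hSz
        exact hz (by unfold Wt; rw [hSz, mul_zero])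
      have h1 := (hf x v hdist).1
      have h2 : (r * ((G.dist x v : ℕ) : ℝ))^2 ≤ ‖f x - f v‖^2 :=
        pow_le_pow_left₀ (by positivity) h1 2
      calc r^2 * (Wt G s x v * ((G.dist x v : ℕ) : ℝ)^2)
          = Wt G s x v * (r * ((G.dist x v : ℕ) : ℝ))^2 := by ring
        _ ≤ Wt G s x v * ‖f x - f v‖^2 :=
            mul_le_mul_of_nonneg_left h2 (wt_nonneg G s x v)
  -- upper bound on E 1
  have hupper : ∑ x, ∑ v, Wt G 1 x v * ‖f x - f v‖^2 ≤ (2*(m:ℝ)) * (α*r)^2 := by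
    have hub : ∀ x v : V, Wt G 1 x v * ‖f x - f v‖^2 ≤ Wt G 1 x v * (α*r)^2 := by
      intro x v
      rw [wt_one G hdeg]
      by_cases h : G.Adj x v
      · rw [if_pos h, one_mul, one_mul]
        have hd1 : G.dist x v = 1 := dist_eq_one_iff_adj.mpr h
        have hf2 := (hf x v (by omega)).2
        rw [hd1] at hf2
        push_cast at hf2
        rw [mul_one] at hf2
        exact pow_le_pow_left₀ (norm_nonneg _) hf2 2
      · rw [if_neg h]
        simp
    calc ∑ x, ∑ v, Wt G 1 x v * ‖f x - f v‖^2
        ≤ ∑ x, ∑ v, Wt G 1 x v * (α*r)^2 :=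
          Finset.sum_le_sum fun x _ => Finset.sum_le_sum fun v _ => hub x v
      _ = (∑ x, ∑ v, Wt G 1 x v) * (α*r)^2 := by
          rw [Finset.sum_mul]
          exact Finset.sum_congr rfl fun x _ => by rw [Finset.sum_mul]
      _ = (2*(m:ℝ)) * (α*r)^2 := by rw [htot 1]
  have hMT := markov_type G hdeg s f
  -- combine everything
  have hmR : (0:ℝ) < m := by exact_mod_cast hmpos
  have hsR : (0:ℝ) < s := by
    have : 0 < s := by omega
    exact_mod_cast this
  have key : ((s:ℝ) * (2*(m:ℝ) - 2*n))^2 * r^2 ≤ (2*(m:ℝ)) * ((s:ℝ) * ((2*(m:ℝ)) * (α*r)^2)) := by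
    have c1 : ((s:ℝ) * (2*(m:ℝ) - 2*n))^2 ≤ (D s)^2 :=
      pow_le_pow_left₀ (by positivity) hDs 2
    have c2 : ((s:ℝ) * (2*(m:ℝ) - 2*n))^2 * r^2 ≤ ((2*(m:ℝ)) * Sd2) * r^2 := by
      have := le_trans c1 hCS
      exact mul_le_mul_of_nonneg_right this (sq_nonneg r)
    have c3 : ((2*(m:ℝ)) * Sd2) * r^2 = (2*(m:ℝ)) * (r^2 * Sd2) := by ring
    have c4 : (2*(m:ℝ)) * (r^2 * Sd2) ≤ (2*(m:ℝ)) * ∑ x, ∑ v, Wt G s x v * ‖f x - f v‖^2 :=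
      mul_le_mul_of_nonneg_left hlower (by positivity)
    have c5 : (2*(m:ℝ)) * ∑ x, ∑ v, Wt G s x v * ‖f x - f v‖^2
        ≤ (2*(m:ℝ)) * ((s:ℝ) * ∑ x, ∑ v, Wt G 1 x v * ‖f x - f v‖^2) :=
      mul_le_mul_of_nonneg_left hMT (by positivity)
    have c6 : (2*(m:ℝ)) * ((s:ℝ) * ∑ x, ∑ v, Wt G 1 x v * ‖f x - f v‖^2)
        ≤ (2*(m:ℝ)) * ((s:ℝ) * ((2*(m:ℝ)) * (α*r)^2)) := by
      apply mul_le_mul_of_nonneg_left _ (by positivity : (0:ℝ) ≤ 2*(m:ℝ))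
      exact mul_le_mul_of_nonneg_left hupper (by positivity)
    linarith
  have hα0 : (0:ℝ) ≤ α := by linarith
  have h1' : ((s:ℝ)*(2*(m:ℝ)-2*n)^2) * ((s:ℝ)*r^2) ≤ (4*(m:ℝ)^2*α^2) * ((s:ℝ)*r^2) := by
    nlinarith [key]
  have h2 : (s:ℝ)*(2*(m:ℝ)-2*n)^2 ≤ 4*(m:ℝ)^2*α^2 :=
    le_of_mul_le_mul_right h1' (by positivity)
  have h3 : (((m:ℝ)-n)/m)^2 * s ≤ α^2 := by
    rw [div_pow, div_mul_eq_mul_div, div_le_iff₀ (by positivity : (0:ℝ) < (m:ℝ)^2)]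
    nlinarith [h2]
  have hcnn : (0:ℝ) ≤ ((m:ℝ)-n)/m := by
    have : (n:ℝ) ≤ m := by exact_mod_cast le_of_lt hnm
    apply div_nonneg (by linarith) (le_of_lt hmR)
  have h4 : ((((m:ℝ)-n)/m) * Real.sqrt s)^2 ≤ α^2 := by
    rw [mul_pow, Real.sq_sqrt (le_of_lt hsR)]
    exact h3
  have h5 : (((m:ℝ)-n)/m) * Real.sqrt s ≤ α := by
    have h6 := Real.sqrt_le_sqrt h4
    rwa [Real.sqrt_sq (by positivity), Real.sqrt_sq hα0] at h6
  have hfrac : (δ - 2)/δ = ((m:ℝ)-n)/m := by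
    have hn0 : (n:ℝ) ≠ 0 := by positivity
    have hm0 : (m:ℝ) ≠ 0 := by positivity
    rw [hδ]
    field_simp
  rw [hfrac]
  exact h5


end GD

/-- Distortion lower bound for graphs of large girth via the average degree `δ`:
any embedding of `(V, d_G)` into `ℓ₂` which has distortion `α` at distances up to `s`
(for an integer `1 < s < g/2`) satisfies `α ≥ ((δ-2)/δ)·√s`; in particular any
`α`-embedding of the whole graph satisfies `α ≥ ((δ-2)/δ)·√(⌊g/2⌋ - 1)`. -/
theorem girth_average_degree_distortion
    (V : Type) [Fintype V] [DecidableEq V] (G : SimpleGraph V) [DecidableRel G.Adj]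
    (g s : ℕ) (δ : ℝ)
    (hconn : G.Connected) (hgirth : (g : ℕ∞) ≤ G.girth)
    (hδ : δ = 2 * (G.edgeFinset.card : ℝ) / (Fintype.card V : ℝ))
    (hs1 : 1 < s) (hs2 : 2 * s < g) :
    (∀ (f : V → lp (fun _ : ℕ => ℝ) 2) (α r : ℝ), 1 ≤ α → 0 < r →
      (∀ u v : V, G.dist u v ≤ s →
        r * (G.dist u v : ℝ) ≤ ‖f u - f v‖ ∧ ‖f u - f v‖ ≤ α * r * (G.dist u v : ℝ)) →
      (δ - 2) / δ * Real.sqrt s ≤ α) ∧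
    (∀ (f : V → lp (fun _ : ℕ => ℝ) 2) (α r : ℝ), 1 ≤ α → 0 < r →
      (∀ u v : V,
        r * (G.dist u v : ℝ) ≤ ‖f u - f v‖ ∧ ‖f u - f v‖ ≤ α * r * (G.dist u v : ℝ)) →
      (δ - 2) / δ * Real.sqrt ((g / 2 : ℕ) - 1 : ℝ) ≤ α) := by
  constructor
  · intro f α r hα hr hf
    exact GD.main_aux G g s δ hconn hgirth hδ hs1 hs2 f α r hα hr hf
  · intro f α r hα hr hf
    have hg5 : 5 ≤ g := by omega
    by_cases h2 : 2 ≤ g / 2 - 1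
    · have h1g : 1 ≤ g / 2 := by omega
      have hcast : (((g / 2 : ℕ) : ℝ) - 1 : ℝ) = ((g / 2 - 1 : ℕ) : ℝ) := by
        push_cast [Nat.cast_sub h1g]
        ring
      rw [hcast]
      exact GD.main_aux G g (g / 2 - 1) δ hconn hgirth hδ (by omega) (by omega)
        f α r hα hr (fun u v _ => hf u v)
    · have hg2 : g / 2 = 2 := by omega
      have hval : (((g / 2 : ℕ) : ℝ) - 1 : ℝ) = 1 := by rw [hg2]; norm_num
      rw [hval, Real.sqrt_one, mul_one]
      have hδnn : 0 ≤ δ := by rw [hδ]; positivity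
      rcases eq_or_lt_of_le hδnn with h0 | h0
      · rw [← h0]
        norm_num
        linarith
      · have : (δ - 2) / δ ≤ 1 := by
          rw [div_le_one h0]
          linarith
        linarith
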